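/- If A = (1, a_1, …, a_k) is an orderly currency with a_1 ≥ 3, then a_i − a_{i−1} ≠ 1 for all i = 1, …, k. -/
import Mathlib


/-- The largest coin of the currency with coins `a 0, …, a k` that is `≤ c`
(or `0` if there is none). -/
def bestCoin (a : ℕ → ℕ) (k : ℕ) (c : ℕ) : ℕ :=
  ((Finset.range (k + 1)).filter fun j => a j ≤ c).sup a

/-- The number of coins used by the greedy algorithm to pay the amount `c`,
using the currency with coins `a 0, …, a k`. -/
def grd (a : ℕ → ℕ) (k : ℕ) : ℕ → ℕ
  | 0 => 0
  | c + 1 =>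
    if h : 1 ≤ bestCoin a k (c + 1) then
      grd a k (c + 1 - bestCoin a k (c + 1)) + 1
    else 0
  decreasing_by omega

/-- The minimal number of coins needed to pay the amount `c`,
using the currency with coins `a 0, …, a k`. -/
noncomputable def opt (a : ℕ → ℕ) (k : ℕ) (c : ℕ) : ℕ :=
  sInf {n | ∃ x : Fin (k + 1) → ℕ, (∑ i, x i) = n ∧ (∑ i, x i * a i.1) = c}

/-- `a 0, …, a k` is a currency: it starts with the coin `1` and is strictly increasing. -/
def IsCurrency (a : ℕ → ℕ) (k : ℕ) : Prop :=
  a 0 = 1 ∧ ∀ i j : ℕ, i < j → j ≤ k → a i < a j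

/-- The currency with coins `a 0, …, a k` is orderly: the greedy payment is
optimal for every positive amount. -/
def Orderly (a : ℕ → ℕ) (k : ℕ) : Prop :=
  ∀ c : ℕ, 0 < c → opt a k c = grd a k c

/-- The set `𝒜(a) = ⋃_{m ≥ 1} {m·a − l : 0 ≤ l ≤ m}`. -/
def calA (a : ℕ) : Set ℕ :=
  {x | ∃ m l : ℕ, 1 ≤ m ∧ l ≤ m ∧ x = m * a - l}

section NoUnitGapAux

variable {a : ℕ → ℕ} {k : ℕ}

/-- `x` is one of the coins. -/
def IsCoin (a : ℕ → ℕ) (k : ℕ) (x : ℕ) : Prop := ∃ j, j ≤ k ∧ a j = x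

lemma currency_mono (hcur : IsCurrency a k) {i j : ℕ} (hij : i ≤ j) (hj : j ≤ k) :
    a i ≤ a j := by
  rcases eq_or_lt_of_le hij with rfl | h
  · exact le_rfl
  · exact (hcur.2 i j h hj).le

lemma coin_pos (hcur : IsCurrency a k) {x : ℕ} (hx : IsCoin a k x) : 1 ≤ x := by
  obtain ⟨j, hj, rfl⟩ := hx
  have h := currency_mono hcur (Nat.zero_le j) hj
  rw [hcur.1] at h
  exact h

lemma coin_le_top (hcur : IsCurrency a k) {x : ℕ} (hx : IsCoin a k x) : x ≤ a k := by
  obtain ⟨j, hj, rfl⟩ := hx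
  exact currency_mono hcur hj le_rfl

lemma two_not_coin (hcur : IsCurrency a k) (ha1 : 3 ≤ a 1) : ¬ IsCoin a k 2 := by
  rintro ⟨j, hj, hj2⟩
  match j, hj2 with
  | 0, h => rw [hcur.1] at h; omega
  | (j+1), h =>
    have : a 1 ≤ a (j+1) := currency_mono hcur (by omega) hj
    omega

lemma bestCoin_le {c : ℕ} : bestCoin a k c ≤ c :=
  Finset.sup_le fun j hj => (Finset.mem_filter.mp hj).2

lemma le_bestCoin {c j : ℕ} (hj : j ≤ k) (hac : a j ≤ c) : a j ≤ bestCoin a k c :=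
  Finset.le_sup (Finset.mem_filter.mpr ⟨Finset.mem_range.mpr (by omega), hac⟩)

lemma bestCoin_isCoin (hcur : IsCurrency a k) {c : ℕ} (hc : 1 ≤ c) :
    IsCoin a k (bestCoin a k c) := by
  have hne : (((Finset.range (k + 1)).filter fun j => a j ≤ c)).Nonempty := by
    refine ⟨0, Finset.mem_filter.mpr ⟨Finset.mem_range.mpr (by omega), ?_⟩⟩
    rw [hcur.1]; exact hc
  obtain ⟨j, hj, hsup⟩ := Finset.exists_mem_eq_sup _ hne a
  have hjk := Finset.mem_range.mp (Finset.mem_filter.mp hj).1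
  exact ⟨j, by omega, hsup.symm⟩

lemma one_le_bestCoin (hcur : IsCurrency a k) {c : ℕ} (hc : 1 ≤ c) :
    1 ≤ bestCoin a k c := by
  have hc' : a 0 ≤ c := le_of_eq_of_le hcur.1 hc
  have h := le_bestCoin (a := a) (k := k) (j := 0) (Nat.zero_le k) hc'
  exact le_of_eq_of_le hcur.1.symm h

lemma grd_zero : grd a k 0 = 0 := by rw [grd]

lemma grd_succ_eq (hcur : IsCurrency a k) {c : ℕ} (hc : 1 ≤ c) :
    grd a k c = grd a k (c - bestCoin a k c) + 1 := by
  match c, hc with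
  | (n+1), _ =>
    rw [grd, dif_pos (one_le_bestCoin hcur (by omega))]

lemma grd_eq_zero (hcur : IsCurrency a k) {c : ℕ} (h : grd a k c = 0) : c = 0 := by
  by_contra hc
  rw [grd_succ_eq hcur (by omega)] at h
  omega

lemma grd_le_one (hcur : IsCurrency a k) {c : ℕ} (h : grd a k c ≤ 1) :
    c = 0 ∨ IsCoin a k c := by
  by_cases hc : c = 0
  · exact Or.inl hc
  · right
    rw [grd_succ_eq hcur (by omega)] at h
    have h0 : grd a k (c - bestCoin a k c) = 0 := by omega
    have := grd_eq_zero hcur h0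
    have hbc : bestCoin a k c ≤ c := bestCoin_le
    have : bestCoin a k c = c := by omega
    rw [← this]
    exact bestCoin_isCoin hcur (by omega)

lemma grd_stop (hcur : IsCurrency a k) {b t : ℕ} (hb : IsCoin a k b)
    (hw : ∀ j, j ≤ k → a j ≤ b + t → a j ≤ b) :
    grd a k (b + t) = grd a k t + 1 := by
  have hb1 : 1 ≤ b := coin_pos hcur hb
  have hbest : bestCoin a k (b + t) = b := by
    apply le_antisymm
    · apply Finset.sup_le
      intro j hj
      have hm := Finset.mem_filter.mp hj
      exact hw j (by have := Finset.mem_range.mp hm.1; omega) hm.2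
    · obtain ⟨j, hj, rfl⟩ := hb
      exact le_bestCoin hj (by omega)
  rw [grd_succ_eq hcur (by omega), hbest]
  congr 2
  omega

lemma opt_le_two {z z' : ℕ} (hz : IsCoin a k z) (hz' : IsCoin a k z') :
    opt a k (z + z') ≤ 2 := by
  obtain ⟨j1, hj1, rfl⟩ := hz
  obtain ⟨j2, hj2, rfl⟩ := hz'
  have hj1' : j1 < k + 1 := by omega
  have hj2' : j2 < k + 1 := by omega
  apply Nat.sInf_le
  refine ⟨(fun i => (if i = (⟨j1, hj1'⟩ : Fin (k+1)) then 1 else 0) +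
      (if i = (⟨j2, hj2'⟩ : Fin (k+1)) then 1 else 0)), ?_, ?_⟩
  · rw [Finset.sum_add_distrib]
    rw [Finset.sum_ite_eq' Finset.univ (⟨j1, hj1'⟩ : Fin (k+1)) (fun _ => 1)]
    rw [Finset.sum_ite_eq' Finset.univ (⟨j2, hj2'⟩ : Fin (k+1)) (fun _ => 1)]
    simp
  · simp only [add_mul, ite_mul, one_mul, zero_mul]
    rw [Finset.sum_add_distrib]
    rw [Finset.sum_ite_eq' Finset.univ (⟨j1, hj1'⟩ : Fin (k+1)) (fun i => a i.1)]
    rw [Finset.sum_ite_eq' Finset.univ (⟨j2, hj2'⟩ : Fin (k+1)) (fun i => a i.1)]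
    simp

/-- Key lemma: if `b` is a coin with no coin in `(b, b+t]`, and `b + t` is a sum of
two coins, then (by orderliness) `grd t ≤ 1`. -/
lemma gen_step (hcur : IsCurrency a k) (hord : Orderly a k) {b t z z' : ℕ}
    (hb : IsCoin a k b) (hw : ∀ j, j ≤ k → a j ≤ b + t → a j ≤ b)
    (hz : IsCoin a k z) (hz' : IsCoin a k z') (hsum : z + z' = b + t) :
    grd a k t ≤ 1 := by
  have hb1 : 1 ≤ b := coin_pos hcur hb
  have h1 : grd a k (b + t) = grd a k t + 1 := grd_stop hcur hb hw
  have h2 : opt a k (b + t) = grd a k (b + t) := hord (b + t) (by omega)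
  have h3 : opt a k (b + t) ≤ 2 := by
    have := opt_le_two hz hz'
    rwa [hsum] at this
  omega

/-- Main combinatorial theorem: an orderly currency with `a 1 ≥ 3` has no two
coins at consecutive integer values. -/
lemma no_pair (hcur : IsCurrency a k) (hord : Orderly a k) (ha1 : 3 ≤ a 1) :
    ∀ p, ¬ (IsCoin a k p ∧ IsCoin a k (p + 1)) := by
  intro p
  induction p using Nat.strong_induction_on with
  | _ p IH =>
  rintro ⟨hp, hp1⟩
  have h2 : ¬ IsCoin a k 2 := two_not_coin hcur ha1
  have hp3 : 3 ≤ p := by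
    by_contra h
    interval_cases p
    · exact absurd (coin_pos hcur hp) (by omega)
    · exact h2 hp1
    · exact h2 hp
  -- the climb
  have climb : ∀ n, ∀ y x : ℕ, a k - y < n → IsCoin a k x → IsCoin a k y →
      x < y → y - x + 2 ≤ p + 1 → False := by
    intro n
    induction n with
    | zero => intro y x h _ _ _ _; omega
    | succ n IHn =>
      intro y x hn hx hy hxy hd
      have hytop : y ≤ a k := coin_le_top hcur hy
      have hx1 : 1 ≤ x := coin_pos hcur hx
      by_cases hd1 : y - x = 1
      · -- companion at distance 1; window length t = p - 1
        by_cases hw : ∃ j, j ≤ k ∧ y < a j ∧ a j ≤ y + (p - 1)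
        · obtain ⟨j, hj, hyj, hjt⟩ := hw
          have hjtop : a j ≤ a k := currency_mono hcur hj le_rfl
          exact IHn (a j) y (by omega) hy ⟨j, hj, rfl⟩ hyj (by omega)
        · push_neg at hw
          have hwin : ∀ j, j ≤ k → a j ≤ y + (p - 1) → a j ≤ y := by
            intro j hj hle
            by_contra hgt
            have := hw j hj (by omega)
            omega
          have hsum : p + x = y + (p - 1) := by omega
          have hg := gen_step hcur hord hy hwin hp hx hsum
          rcases grd_le_one hcur hg with h | h
          · omega
          · refine IH (p - 1) (by omega) ⟨h, ?_⟩
            rwa [show p - 1 + 1 = p by omega]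
      · -- companion at distance d ≥ 2; window length t = p + 1 - d
        have hd2 : 2 ≤ y - x := by omega
        set t := p + 1 - (y - x) with ht
        have ht2 : 2 ≤ t := by omega
        by_cases hw : ∃ j, j ≤ k ∧ y < a j ∧ a j ≤ y + t
        · obtain ⟨j, hj, hyj, hjt⟩ := hw
          have hjtop : a j ≤ a k := currency_mono hcur hj le_rfl
          exact IHn (a j) y (by omega) hy ⟨j, hj, rfl⟩ hyj (by omega)
        · push_neg at hw
          have hwin : ∀ j, j ≤ k → a j ≤ y + t → a j ≤ y := by
            intro j hj hle
            by_contra hgt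
            have := hw j hj (by omega)
            omega
          have hsum1 : (p + 1) + x = y + t := by omega
          have hg1 := gen_step hcur hord hy hwin hp1 hx hsum1
          have hcoin_t : IsCoin a k t := by
            rcases grd_le_one hcur hg1 with h | h
            · omega
            · exact h
          have hwin' : ∀ j, j ≤ k → a j ≤ y + (t - 1) → a j ≤ y :=
            fun j hj hle => hwin j hj (by omega)
          have hsum2 : p + x = y + (t - 1) := by omega
          have hg2 := gen_step hcur hord hy hwin' hp hx hsum2
          rcases grd_le_one hcur hg2 with h | h
          · omega
          · refine IH (t - 1) (by omega) ⟨h, ?_⟩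
            rwa [show t - 1 + 1 = t by omega]
  exact climb (a k + 1) (p + 1) p (by omega) hp hp1 (by omega) (by omega)

end NoUnitGapAux

/-- If `(1, a 1, …, a k)` is orderly and `a 1 ≥ 3`, then no two consecutive coins
differ by `1`. -/
theorem no_unit_gap (a : ℕ → ℕ) (k : ℕ)
    (hcur : IsCurrency a k) (hord : Orderly a k) (ha1 : 3 ≤ a 1) :
    ∀ i : ℕ, 1 ≤ i → i ≤ k → a i - a (i - 1) ≠ 1 := by
  intro i h1i hik heq
  have hlt : a (i - 1) < a i := hcur.2 (i - 1) i (by omega) hik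
  have hsucc : a i = a (i - 1) + 1 := by omega
  refine no_pair hcur hord ha1 (a (i - 1)) ⟨⟨i - 1, by omega, rfl⟩, ⟨i, hik, ?_⟩⟩
  omega
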